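/- arXiv:2302.14618 — 3 statements merged into one kernel-verified Lean document; each statement's English description precedes it below -/
import Mathlib

section
/- For positive definite matrices A and B and t ∈ [0,1], the Bures-Wasserstein geodesic point A◇_t B := (1-t)²A + t²B + t(1-t)[(AB)^{1/2} + (BA)^{1/2}] equals |(1-t)A^{1/2} + tU*B^{1/2}|², where U is the unitary from the polar decomposition B^{1/2}A^{1/2} = U(A^{1/2}BA^{1/2})^{1/2} and |X|² = X*X. -/
open Matrix Filter Asymptotics
open scoped ComplexOrder

/-- The PSD square root of a matrix (0 if not PSD). -/
noncomputable def msqrt {n : ℕ} (M : Matrix (Fin n) (Fin n) ℂ) : Matrix (Fin n) (Fin n) ℂ :=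
  letI := Classical.propDecidable M.PosSemidef
  if h : M.PosSemidef then
    h.1.eigenvectorUnitary.1 * diagonal ((↑) ∘ (√·) ∘ h.1.eigenvalues) *
      (star h.1.eigenvectorUnitary : Matrix (Fin n) (Fin n) ℂ) else 0

/-- `(AB)^{1/2} := A^{1/2} (A^{1/2} B A^{1/2})^{1/2} A^{-1/2}`. -/
noncomputable def sqAB {n : ℕ} (A B : Matrix (Fin n) (Fin n) ℂ) : Matrix (Fin n) (Fin n) ℂ :=
  msqrt A * msqrt (msqrt A * B * msqrt A) * (msqrt A)⁻¹

/-- Bures-Wasserstein geodesic `A ◇_t B`. -/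
noncomputable def geo {n : ℕ} (A B : Matrix (Fin n) (Fin n) ℂ) (t : ℝ) : Matrix (Fin n) (Fin n) ℂ :=
  ((1 - t)^2 : ℝ) • A + (t^2 : ℝ) • B + (t * (1 - t) : ℝ) • (sqAB A B + (sqAB A B)ᴴ)

/-- Bures-Wasserstein distance. -/
noncomputable def dBW {n : ℕ} (A B : Matrix (Fin n) (Fin n) ℂ) : ℝ :=
  Real.sqrt ((Matrix.trace A).re + (Matrix.trace B).re -
    2 * (Matrix.trace (msqrt (msqrt A * B * msqrt A))).re)

lemma msqrt_mul_self' {n : ℕ} {M : Matrix (Fin n) (Fin n) ℂ} (h : M.PosSemidef) :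
    msqrt M * msqrt M = M := by
  rw [msqrt, dif_pos h]
  set V := h.1.eigenvectorUnitary
  have hV : (star V : Matrix (Fin n) (Fin n) ℂ) * V.1 = 1 := Unitary.coe_star_mul_self V
  have key : V.1 * diagonal ((↑) ∘ (√·) ∘ h.1.eigenvalues) * (star V : Matrix (Fin n) (Fin n) ℂ) *
      (V.1 * diagonal ((↑) ∘ (√·) ∘ h.1.eigenvalues) * (star V : Matrix (Fin n) (Fin n) ℂ))
      = V.1 * (diagonal ((↑) ∘ (√·) ∘ h.1.eigenvalues) * diagonal ((↑) ∘ (√·) ∘ h.1.eigenvalues))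
        * (star V : Matrix (Fin n) (Fin n) ℂ) := by
    simp only [mul_assoc]; rw [← mul_assoc (star V : Matrix (Fin n) (Fin n) ℂ) V.1, hV, one_mul]
  rw [key, diagonal_mul_diagonal]
  conv_rhs => rw [h.1.spectral_theorem, Unitary.conjStarAlgAut_apply]
  congr 3
  funext i
  simp only [Function.comp_apply]
  rw [← Complex.ofReal_mul, Real.mul_self_sqrt (h.eigenvalues_nonneg i)]
  rfl

lemma msqrt_conjTranspose' {n : ℕ} {M : Matrix (Fin n) (Fin n) ℂ} (h : M.PosSemidef) :
    (msqrt M)ᴴ = msqrt M := by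
  rw [msqrt, dif_pos h]
  simp [Matrix.conjTranspose_mul, Matrix.star_eq_conjTranspose, mul_assoc]
  congr 3
  funext i
  simp

theorem stmt2 {n : ℕ} (A B U : Matrix (Fin n) (Fin n) ℂ)
    (hA : A.PosDef) (hB : B.PosDef) (hU : U ∈ Matrix.unitaryGroup (Fin n) ℂ)
    (hpolar : msqrt B * msqrt A = U * msqrt (msqrt A * B * msqrt A))
    (t : ℝ) (ht0 : 0 ≤ t) (ht1 : t ≤ 1) :
    geo A B t =
      ((1 - t) • msqrt A + t • (Uᴴ * msqrt B))ᴴ *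
        ((1 - t) • msqrt A + t • (Uᴴ * msqrt B)) := by
  classical
  have hAsd := hA.posSemidef
  have hBsd := hB.posSemidef
  rw [geo, sqAB]
  set a := msqrt A with ha_def
  set b := msqrt B with hb_def
  set C := msqrt (a * B * a) with hc_def
  have ha : a = msqrt A := ha_def
  have hb : b = msqrt B := hb_def
  have haa : a * a = A := by rw [ha]; exact msqrt_mul_self' hAsd
  have hbb : b * b = B := by rw [hb]; exact msqrt_mul_self' hBsd
  have haH : aᴴ = a := by rw [ha]; exact msqrt_conjTranspose' hAsd
  have hbH : bᴴ = b := by rw [hb]; exact msqrt_conjTranspose' hBsd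
  have hUl : Uᴴ * U = 1 := by
    have := (Matrix.mem_unitaryGroup_iff').mp hU
    simpa [Matrix.star_eq_conjTranspose] using this
  have hUr : U * Uᴴ = 1 := by
    have := (Matrix.mem_unitaryGroup_iff).mp hU
    simpa [Matrix.star_eq_conjTranspose] using this
  have hC_eq : C = Uᴴ * (b * a) := by
    rw [hpolar, ← mul_assoc, hUl, one_mul]
  have hdet : IsUnit a.det := by
    have hdA : a.det * a.det = A.det := by rw [← Matrix.det_mul, haa]
    have hAne : A.det ≠ 0 := hA.det_pos.ne'
    have hane : a.det ≠ 0 := by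
      intro h; rw [h, mul_zero] at hdA; exact hAne hdA.symm
    exact hane.isUnit
  have hainv : a * a⁻¹ = 1 := Matrix.mul_nonsing_inv a hdet
  have hsq : a * C * a⁻¹ = a * (Uᴴ * b) := by
    rw [hC_eq, show a * (Uᴴ * (b * a)) * a⁻¹ = a * (Uᴴ * b) * (a * a⁻¹) by
      simp only [mul_assoc], hainv, mul_one]
  have hSH : (a * (Uᴴ * b))ᴴ = b * U * a := by
    simp [Matrix.conjTranspose_mul, haH, hbH, mul_assoc]
  have hXH : (Uᴴ * b)ᴴ = b * U := by
    simp [Matrix.conjTranspose_mul, hbH]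
  have hXX : b * U * (Uᴴ * b) = B := by
    rw [mul_assoc, ← mul_assoc U, hUr, one_mul, hbb]
  rw [hsq, hSH]
  rw [conjTranspose_add, conjTranspose_smul, conjTranspose_smul, haH, hXH,
    star_trivial, star_trivial]
  simp only [Matrix.add_mul, Matrix.mul_add, Matrix.smul_mul, Matrix.mul_smul,
    smul_smul]
  rw [haa, hXX]
  module
end

section
/- For positive definite A, B and r, t ∈ [0,1], the Bures-Wasserstein geodesic satisfies the reparametrization identity A◇_r(A◇_t B) = A◇_{rt} B. -/
open Matrix Filter Asymptotics
open scoped ComplexOrder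

open scoped MatrixOrder

lemma msqrt_of_psd {n : ℕ} {M : Matrix (Fin n) (Fin n) ℂ} (h : M.PosSemidef) :
    msqrt M = CFC.sqrt M := by
  unfold msqrt
  rw [dif_pos h, CFC.sqrt_eq_cfc, cfc_nnreal_eq_real _ M, h.1.cfc_eq]
  simp only [IsHermitian.cfc, Unitary.conjStarAlgAut_apply]
  congr 3
  funext i
  simp [Real.coe_sqrt, Real.coe_toNNReal', max_eq_left (h.eigenvalues_nonneg i)]

lemma smul_psd {n : ℕ} {c : ℝ} (hc : 0 ≤ c) {M : Matrix (Fin n) (Fin n) ℂ}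
    (hM : M.PosSemidef) : (c • M).PosSemidef := by
  constructor
  · unfold Matrix.IsHermitian
    rw [conjTranspose_smul, hM.1, star_trivial]
  · intro x
    have key := mul_nonneg (Complex.zero_le_real.mpr hc) (hM.2 x)
    simp only [Finsupp.mul_sum] at key
    simpa [RCLike.real_smul_eq_coe_mul, mul_assoc, mul_left_comm] using key

lemma geo_key {n : ℕ} {A X D : Matrix (Fin n) (Fin n) ℂ} (hA : A.PosDef)
    (hD : msqrt (msqrt A * X * msqrt A) = D) (hDH : Dᴴ = D)
    (hDD : D * D = msqrt A * X * msqrt A) (u : ℝ) :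
    geo A X u = (msqrt A)⁻¹ *
      ((((1 - u : ℝ)) • A + (u : ℝ) • D) * (((1 - u : ℝ)) • A + (u : ℝ) • D)) * (msqrt A)⁻¹ := by
  set S := msqrt A with hS
  have hSps : S.PosSemidef := by
    rw [hS, msqrt_of_psd hA.posSemidef]
    exact (CFC.sqrt_nonneg A).posSemidef
  have hSS : S * S = A := by
    rw [hS, msqrt_of_psd hA.posSemidef]
    exact CFC.sqrt_mul_sqrt_self A hA.posSemidef.nonneg
  have hdet : IsUnit S.det := by
    rw [isUnit_iff_ne_zero]
    intro h
    have : A.det = 0 := by rw [← hSS, det_mul, h, mul_zero]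
    have := hA.det_pos
    simp_all
  have hS1 : S * S⁻¹ = 1 := mul_nonsing_inv S hdet
  have hS1' : S⁻¹ * S = 1 := nonsing_inv_mul S hdet
  have hSH : Sᴴ = S := hSps.isHermitian
  have hSiH : (S⁻¹)ᴴ = S⁻¹ := by rw [conjTranspose_nonsing_inv, hSH]
  have l1 : ∀ W : Matrix (Fin n) (Fin n) ℂ, S⁻¹ * (S * W) = W := fun W => by
    rw [← Matrix.mul_assoc, hS1', Matrix.one_mul]
  have l2 : ∀ W : Matrix (Fin n) (Fin n) ℂ, S * (S⁻¹ * W) = W := fun W => by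
    rw [← Matrix.mul_assoc, hS1, Matrix.one_mul]
  have hsq : sqAB A X = S * D * S⁻¹ := by
    rw [sqAB, ← hS, hD]
  have hconj : (S * D * S⁻¹)ᴴ = S⁻¹ * (D * S) := by
    rw [conjTranspose_mul, conjTranspose_mul, hSiH, hSH, hDH]
  have e1 : S⁻¹ * (A * A) * S⁻¹ = A := by
    rw [← hSS]
    simp only [Matrix.mul_assoc, l1, l2, hS1, Matrix.mul_one]
  have e2 : S⁻¹ * (A * D) * S⁻¹ = S * (D * S⁻¹) := by
    rw [← hSS]
    simp only [Matrix.mul_assoc, l1]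
  have e3 : S⁻¹ * (D * A) * S⁻¹ = S⁻¹ * (D * S) := by
    rw [← hSS]
    simp only [Matrix.mul_assoc, hS1, Matrix.mul_one]
  have e4 : S⁻¹ * (D * D) * S⁻¹ = X := by
    rw [hDD]
    simp only [Matrix.mul_assoc, hS1, Matrix.mul_one, l1]
  rw [geo, hsq, hconj]
  have expand : (((1 - u : ℝ)) • A + (u : ℝ) • D) * (((1 - u : ℝ)) • A + (u : ℝ) • D)
      = ((1-u)*(1-u) : ℝ) • (A * A) + ((1-u)*u : ℝ) • (A * D)
        + (u*(1-u) : ℝ) • (D * A) + (u*u : ℝ) • (D * D) := by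
    simp only [add_mul, mul_add, smul_mul_assoc, mul_smul_comm, smul_smul]
    module
  rw [expand]
  simp only [Matrix.mul_add, Matrix.add_mul, Matrix.mul_smul, Matrix.smul_mul, e1, e2, e3, e4]
  rw [Matrix.mul_assoc S D S⁻¹]
  match_scalars <;> ring

theorem stmt5 {n : ℕ} (A B : Matrix (Fin n) (Fin n) ℂ)
    (hA : A.PosDef) (hB : B.PosDef) (r t : ℝ)
    (hr0 : 0 ≤ r) (hr1 : r ≤ 1) (ht0 : 0 ≤ t) (ht1 : t ≤ 1) :
    geo A (geo A B t) r = geo A B (r * t) := by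
  set S := msqrt A with hS
  have hSps : S.PosSemidef := by
    rw [hS, msqrt_of_psd hA.posSemidef]
    exact (CFC.sqrt_nonneg A).posSemidef
  have hSS : S * S = A := by
    rw [hS, msqrt_of_psd hA.posSemidef]
    exact CFC.sqrt_mul_sqrt_self A hA.posSemidef.nonneg
  have hdet : IsUnit S.det := by
    rw [isUnit_iff_ne_zero]
    intro h
    have : A.det = 0 := by rw [← hSS, det_mul, h, mul_zero]
    have := hA.det_pos
    simp_all
  have hS1 : S * S⁻¹ = 1 := mul_nonsing_inv S hdet
  have hS1' : S⁻¹ * S = 1 := nonsing_inv_mul S hdet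
  have hSH : Sᴴ = S := hSps.isHermitian
  -- the matrix SBS and its square root C
  have hSBSps : (S * B * S).PosSemidef := by
    have := hB.posSemidef.conjTranspose_mul_mul_same S
    rwa [hSH] at this
  set C := msqrt (S * B * S) with hC
  have hCps : C.PosSemidef := by
    rw [hC, msqrt_of_psd hSBSps]
    exact (CFC.sqrt_nonneg _).posSemidef
  have hCH : Cᴴ = C := hCps.isHermitian
  have hCC : C * C = S * B * S := by
    rw [hC, msqrt_of_psd hSBSps]
    exact CFC.sqrt_mul_sqrt_self _ hSBSps.nonneg
  -- first application of the key lemma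
  have h1 := geo_key hA (X := B) (D := C) rfl hCH hCC
  -- Xt
  set Xt : Matrix (Fin n) (Fin n) ℂ := ((1 - t : ℝ)) • A + (t : ℝ) • C with hXt
  have hXtps : Xt.PosSemidef :=
    (smul_psd (by linarith) hA.posSemidef).add (smul_psd ht0 hCps)
  have hXtH : Xtᴴ = Xt := hXtps.isHermitian
  have hXX : Xt * Xt = S * geo A B t * S := by
    rw [h1 t, ← hXt, ← hS]
    simp only [← Matrix.mul_assoc]
    rw [hS1, Matrix.one_mul, Matrix.mul_assoc, hS1', Matrix.mul_one]
  have hXXps : (Xt * Xt).PosSemidef := by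
    have := Matrix.posSemidef_conjTranspose_mul_self Xt
    rwa [hXtH] at this
  have h2 : msqrt (S * geo A B t * S) = Xt := by
    rw [← hXX, msqrt_of_psd hXXps]
    exact CFC.sqrt_mul_self Xt hXtps.nonneg
  -- second application of the key lemma
  have h3 := geo_key hA (X := geo A B t) (D := Xt) h2 hXtH hXX r
  have h4 := h1 (r * t)
  have hW : ((1 - r : ℝ)) • A + (r : ℝ) • Xt
      = ((1 - r * t : ℝ)) • A + ((r * t) : ℝ) • C := by
    rw [hXt]
    match_scalars <;> ring
  rw [h3, hW, h4]
end

section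
/- For positive definite A, B and r, s, t ∈ [0,1], (A◇_s B)◇_r(A◇_t B) = A◇_{(1-r)s+rt} B; i.e., the Bures-Wasserstein geodesic restricted to points between A and B is affinely reparametrizable. -/
open Matrix Filter Asymptotics
open scoped ComplexOrder

namespace BWaux

open scoped MatrixOrder

variable {n : ℕ}

local notation "Mat" => Matrix (Fin n) (Fin n) ℂ

lemma msqrt_eq {M : Mat} (h : M.PosSemidef) : msqrt M = CFC.sqrt M := by
  unfold msqrt
  rw [dif_pos h, CFC.sqrt_eq_cfc, cfc_nnreal_eq_real _ M, h.1.cfc_eq]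
  simp only [IsHermitian.cfc, Unitary.conjStarAlgAut_apply]
  congr 3
  funext i
  simp [h.eigenvalues_nonneg i]

lemma msqrt_posSemidef {M : Mat} (h : M.PosSemidef) : (msqrt M).PosSemidef := by
  rw [msqrt_eq h]; exact (CFC.sqrt_nonneg M).posSemidef

lemma msqrt_mul_self {M : Mat} (h : M.PosSemidef) : msqrt M * msqrt M = M := by
  rw [msqrt_eq h]; exact CFC.sqrt_mul_sqrt_self M h.nonneg

lemma posDef_of_posSemidef_isUnit_det {M : Mat} (h : M.PosSemidef) (hd : IsUnit M.det) :
    M.PosDef := by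
  have hM : IsUnit M := (Matrix.isUnit_iff_isUnit_det M).2 hd
  exact h.posDef_iff_isUnit.2 hM

lemma msqrt_posDef {M : Mat} (h : M.PosDef) : (msqrt M).PosDef := by
  refine posDef_of_posSemidef_isUnit_det (msqrt_posSemidef h.posSemidef) ?_
  have hdd : (msqrt M).det * (msqrt M).det = M.det := by
    rw [← Matrix.det_mul, msqrt_mul_self h.posSemidef]
  have hMdet : IsUnit M.det := h.det_pos.ne'.isUnit
  rw [← hdd] at hMdet
  exact isUnit_of_mul_isUnit_left hMdet

lemma posDef_conj {M P : Mat} (hM : M.PosDef) (hP : IsUnit P.det) :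
    (Pᴴ * M * P).PosDef := by
  have hPu : IsUnit P := (Matrix.isUnit_iff_isUnit_det P).2 hP
  exact hM.conjTranspose_mul_mul_same (Matrix.mulVec_injective_of_isUnit hPu)

lemma real_smul_eq {c : ℝ} {M : Mat} : c • M = (c : ℂ) • M := by
  ext i j
  simp [Complex.real_smul]

lemma smul_key (c : ℝ) (hc : 0 ≤ c) (M : Mat) :
    ((Real.sqrt c : ℂ) • (1 : Mat))ᴴ * M * ((Real.sqrt c : ℂ) • (1 : Mat)) = c • M := by
  rw [real_smul_eq]
  rw [Matrix.conjTranspose_smul]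
  simp only [Matrix.conjTranspose_one, Matrix.smul_mul, Matrix.mul_smul, smul_smul,
    one_mul, mul_one, RCLike.star_def, Complex.conj_ofReal]
  rw [← Complex.ofReal_mul, Real.mul_self_sqrt hc]

lemma smul_posSemidef {c : ℝ} (hc : 0 ≤ c) {M : Mat} (h : M.PosSemidef) :
    (c • M).PosSemidef := by
  rw [← smul_key c hc M]
  exact h.conjTranspose_mul_mul_same _

lemma smul_posDef {c : ℝ} (hc : 0 < c) {M : Mat} (h : M.PosDef) :
    (c • M).PosDef := by
  rw [← smul_key c hc.le M]
  refine posDef_conj h ?_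
  have hd : ((Real.sqrt c : ℂ) • (1 : Mat)).det = (Real.sqrt c : ℂ) ^ n := by
    simp [Matrix.det_smul]
  rw [hd]
  exact IsUnit.pow n (Complex.ofReal_ne_zero.mpr (Real.sqrt_ne_zero'.mpr hc)).isUnit

lemma sqAB_of {C T : Mat} (hC : C.PosDef) (hT : T.PosDef) :
    sqAB C (T * C * T) = C * T := by
  have hCpsd := hC.posSemidef
  have hS : (msqrt C).PosDef := msqrt_posDef hC
  have hSS : msqrt C * msqrt C = C := msqrt_mul_self hCpsd
  have hSdet : IsUnit (msqrt C).det := hS.det_pos.ne'.isUnit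
  have hSTS : (msqrt C * T * msqrt C).PosSemidef := by
    have h := hT.posSemidef.conjTranspose_mul_mul_same (msqrt C)
    rwa [hS.1.eq] at h
  have hX : msqrt C * (T * C * T) * msqrt C = (msqrt C * T * msqrt C) ^ 2 := by
    have e : (msqrt C * T * msqrt C) ^ 2 = msqrt C * T * (msqrt C * msqrt C) * T * msqrt C := by
      noncomm_ring
    rw [e, hSS]
    noncomm_ring
  have hXpsd : (msqrt C * (T * C * T) * msqrt C).PosSemidef := by
    rw [hX]; exact hSTS.pow 2
  have hmsq : msqrt (msqrt C * (T * C * T) * msqrt C) = msqrt C * T * msqrt C := by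
    rw [msqrt_eq hXpsd]
    rw [hX]; exact CFC.sqrt_sq _ hSTS.nonneg
  unfold sqAB
  rw [hmsq]
  calc msqrt C * (msqrt C * T * msqrt C) * (msqrt C)⁻¹
      = (msqrt C * msqrt C) * T * (msqrt C * (msqrt C)⁻¹) := by noncomm_ring
    _ = C * T := by rw [hSS, Matrix.mul_nonsing_inv _ hSdet, mul_one]

lemma geo_formula {C T : Mat} (hC : C.PosDef) (hT : T.PosDef) (r : ℝ) :
    geo C (T * C * T) r
      = ((1 - r) • (1 : Mat) + r • T) * C * ((1 - r) • (1 : Mat) + r • T) := by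
  have h1 := sqAB_of hC hT
  have h2 : (C * T)ᴴ = T * C := by
    rw [Matrix.conjTranspose_mul, hC.1.eq, hT.1.eq]
  rw [geo, h1, h2]
  simp only [Matrix.add_mul, Matrix.mul_add, Matrix.smul_mul, Matrix.mul_smul, one_mul,
    mul_one, smul_smul, smul_add, Matrix.mul_assoc, Matrix.mul_one, Matrix.one_mul]
  module

end BWaux

open BWaux in
theorem stmt6 {n : ℕ} (A B : Matrix (Fin n) (Fin n) ℂ)
    (hA : A.PosDef) (hB : B.PosDef) (r s t : ℝ)
    (hr0 : 0 ≤ r) (hr1 : r ≤ 1) (hs0 : 0 ≤ s) (hs1 : s ≤ 1)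
    (ht0 : 0 ≤ t) (ht1 : t ≤ 1) :
    geo (geo A B s) (geo A B t) r = geo A B ((1 - r) * s + r * t) := by
  classical
  have hApsd := hA.posSemidef
  set S := msqrt A with hSdef
  have hS : S.PosDef := msqrt_posDef hA
  have hSS : S * S = A := msqrt_mul_self hApsd
  have hSdet : IsUnit S.det := hS.det_pos.ne'.isUnit
  have hSBS : (S * B * S).PosDef := by
    have h := posDef_conj hB hSdet
    rwa [hS.1.eq] at h
  set M := msqrt (S * B * S) with hMdef
  have hM : M.PosDef := msqrt_posDef hSBS
  have hMM : M * M = S * B * S := msqrt_mul_self hSBS.posSemidef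
  have hSidet : IsUnit (S⁻¹).det := S.isUnit_nonsing_inv_det hSdet
  set Tm := S⁻¹ * M * S⁻¹ with hTmdef
  have hTm : Tm.PosDef := by
    have h := posDef_conj hM hSidet
    rwa [hS.1.inv.eq] at h
  have hTAT : Tm * A * Tm = B := by
    rw [hTmdef, ← hSS]
    calc S⁻¹ * M * S⁻¹ * (S * S) * (S⁻¹ * M * S⁻¹)
        = S⁻¹ * (M * ((S⁻¹ * S) * ((S * S⁻¹) * M))) * S⁻¹ := by noncomm_ring
      _ = S⁻¹ * (M * M) * S⁻¹ := by
          rw [Matrix.nonsing_inv_mul _ hSdet, Matrix.mul_nonsing_inv _ hSdet, one_mul, one_mul]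
      _ = (S⁻¹ * S) * B * (S * S⁻¹) := by rw [hMM]; noncomm_ring
      _ = B := by
          rw [Matrix.nonsing_inv_mul _ hSdet, Matrix.mul_nonsing_inv _ hSdet, one_mul, mul_one]
  have hgeo : ∀ u : ℝ, geo A B u
      = ((1 - u) • (1 : Matrix (Fin n) (Fin n) ℂ) + u • Tm) * A
        * ((1 - u) • (1 : Matrix (Fin n) (Fin n) ℂ) + u • Tm) := by
    intro u
    rw [← hTAT]
    exact geo_formula hA hTm u
  have hSu : ∀ u : ℝ, 0 ≤ u → u ≤ 1 →
      ((1 - u) • (1 : Matrix (Fin n) (Fin n) ℂ) + u • Tm).PosDef := by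
    intro u hu0 hu1
    rcases lt_or_eq_of_le hu1 with hu | hu
    · exact (smul_posDef (by linarith) Matrix.PosDef.one).add_posSemidef
        (smul_posSemidef hu0 hTm.posSemidef)
    · subst hu
      simpa using hTm
  set Ss := (1 - s) • (1 : Matrix (Fin n) (Fin n) ℂ) + s • Tm with hSsdef
  set St := (1 - t) • (1 : Matrix (Fin n) (Fin n) ℂ) + t • Tm with hStdef
  have hSs : Ss.PosDef := hSu s hs0 hs1
  have hSt : St.PosDef := hSu t ht0 ht1
  have hSsdet : IsUnit Ss.det := hSs.det_pos.ne'.isUnit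
  have hSsidet : IsUnit (Ss⁻¹).det := Ss.isUnit_nonsing_inv_det hSsdet
  have hTT : (Tm * Tm).PosSemidef := by
    rw [← pow_two]; exact hTm.posSemidef.pow 2
  have hTTpd : (Tm * Tm).PosDef := by
    have h := posDef_conj Matrix.PosDef.one hTm.det_pos.ne'.isUnit
    rwa [hTm.1.eq, Matrix.mul_one] at h
  have hcomm : Ss * St = St * Ss := by
    rw [hSsdef, hStdef]
    simp only [Matrix.add_mul, Matrix.mul_add, Matrix.smul_mul, Matrix.mul_smul, one_mul,
      mul_one, smul_smul, Matrix.mul_one, Matrix.one_mul]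
    module
  have hexp : Ss * St = ((1 - s) * (1 - t)) • (1 : Matrix (Fin n) (Fin n) ℂ)
      + (s * (1 - t) + (1 - s) * t) • Tm + (s * t) • (Tm * Tm) := by
    rw [hSsdef, hStdef]
    simp only [Matrix.add_mul, Matrix.mul_add, Matrix.smul_mul, Matrix.mul_smul, one_mul,
      mul_one, smul_smul, Matrix.mul_one, Matrix.one_mul]
    module
  have hprod : (Ss * St).PosDef := by
    rw [hexp]
    rcases lt_or_eq_of_le hs1 with hs | hs
    · rcases lt_or_eq_of_le ht1 with ht | ht
      · have ha : 0 < (1 - s) * (1 - t) := by nlinarith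
        have hb : 0 ≤ s * (1 - t) + (1 - s) * t := by nlinarith
        have hcc : 0 ≤ s * t := mul_nonneg hs0 ht0
        exact ((smul_posDef ha Matrix.PosDef.one).add_posSemidef
          (smul_posSemidef hb hTm.posSemidef)).add_posSemidef (smul_posSemidef hcc hTT)
      · have ha : 0 ≤ (1 - s) * (1 - t) := by nlinarith
        have hb : 0 < s * (1 - t) + (1 - s) * t := by rw [ht]; nlinarith
        have hcc : 0 ≤ s * t := mul_nonneg hs0 ht0
        exact (Matrix.PosDef.posSemidef_add (smul_posSemidef ha Matrix.PosSemidef.one)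
          (smul_posDef hb hTm)).add_posSemidef (smul_posSemidef hcc hTT)
    · rcases lt_or_eq_of_le ht1 with ht | ht
      · have ha : 0 ≤ (1 - s) * (1 - t) := by nlinarith
        have hb : 0 < s * (1 - t) + (1 - s) * t := by rw [hs]; nlinarith
        have hcc : 0 ≤ s * t := mul_nonneg hs0 ht0
        exact (Matrix.PosDef.posSemidef_add (smul_posSemidef ha Matrix.PosSemidef.one)
          (smul_posDef hb hTm)).add_posSemidef (smul_posSemidef hcc hTT)
      · have ha : 0 ≤ (1 - s) * (1 - t) := by nlinarith
        have hb : 0 ≤ s * (1 - t) + (1 - s) * t := by nlinarith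
        have hcc : 0 < s * t := by rw [hs, ht]; norm_num
        exact Matrix.PosDef.posSemidef_add
          ((smul_posSemidef ha Matrix.PosSemidef.one).add
            (smul_posSemidef hb hTm.posSemidef)) (smul_posDef hcc hTTpd)
  have hcancel : Ss⁻¹ * (Ss * St) * Ss⁻¹ = St * Ss⁻¹ := by
    rw [← Matrix.mul_assoc, Matrix.nonsing_inv_mul _ hSsdet, one_mul]
  have hc' : Ss⁻¹ * St = St * Ss⁻¹ := by
    have h2 : Ss⁻¹ * (St * Ss) * Ss⁻¹ = Ss⁻¹ * St := by
      rw [Matrix.mul_assoc, Matrix.mul_assoc, Matrix.mul_nonsing_inv _ hSsdet, mul_one]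
    rw [← h2, ← hcancel, hcomm]
  have hT'pd : (St * Ss⁻¹).PosDef := by
    have h := posDef_conj hprod hSsidet
    rw [hSs.1.inv.eq] at h
    rwa [hcancel] at h
  have e1 : Ss * (St * Ss⁻¹) = St := by
    rw [← hc', Matrix.mul_nonsing_inv_cancel_left _ _ hSsdet]
  have hT'C : (St * Ss⁻¹) * (Ss * A * Ss) * (St * Ss⁻¹) = St * A * St := by
    calc (St * Ss⁻¹) * (Ss * A * Ss) * (St * Ss⁻¹)
        = St * (Ss⁻¹ * Ss) * A * (Ss * (St * Ss⁻¹)) := by simp only [Matrix.mul_assoc]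
      _ = St * A * St := by rw [Matrix.nonsing_inv_mul _ hSsdet, Matrix.mul_one, e1]
  have hCs : (Ss * A * Ss).PosDef := by
    have h := posDef_conj hA hSsdet
    rwa [hSs.1.eq] at h
  have hPSs : ((1 - r) • (1 : Matrix (Fin n) (Fin n) ℂ) + r • (St * Ss⁻¹)) * Ss
      = (1 - ((1 - r) * s + r * t)) • (1 : Matrix (Fin n) (Fin n) ℂ)
        + ((1 - r) * s + r * t) • Tm := by
    simp only [Matrix.add_mul, Matrix.smul_mul, one_mul, Matrix.one_mul,
      Matrix.nonsing_inv_mul_cancel_right _ _ hSsdet]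
    rw [hSsdef, hStdef]
    simp only [smul_add, smul_smul]
    module
  have hSsP : Ss * ((1 - r) • (1 : Matrix (Fin n) (Fin n) ℂ) + r • (St * Ss⁻¹))
      = (1 - ((1 - r) * s + r * t)) • (1 : Matrix (Fin n) (Fin n) ℂ)
        + ((1 - r) * s + r * t) • Tm := by
    simp only [Matrix.mul_add, Matrix.mul_smul, mul_one, Matrix.mul_one, e1]
    rw [hSsdef, hStdef]
    simp only [smul_add, smul_smul]
    module
  rw [hgeo s, hgeo t]
  rw [show ((1 - s) • (1 : Matrix (Fin n) (Fin n) ℂ) + s • Tm) = Ss from rfl,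
    show ((1 - t) • (1 : Matrix (Fin n) (Fin n) ℂ) + t • Tm) = St from rfl]
  rw [← hT'C, geo_formula hCs hT'pd r, hgeo ((1 - r) * s + r * t)]
  calc ((1 - r) • (1 : Matrix (Fin n) (Fin n) ℂ) + r • (St * Ss⁻¹)) * (Ss * A * Ss)
        * ((1 - r) • (1 : Matrix (Fin n) (Fin n) ℂ) + r • (St * Ss⁻¹))
      = (((1 - r) • (1 : Matrix (Fin n) (Fin n) ℂ) + r • (St * Ss⁻¹)) * Ss) * A
        * (Ss * ((1 - r) • (1 : Matrix (Fin n) (Fin n) ℂ) + r • (St * Ss⁻¹))) := by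
        simp only [Matrix.mul_assoc]
    _ = _ := by rw [hPSs, hSsP]
end
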